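/- Fix φ ∈ Φ* with |φ| = 1, let λ be a partition of m, and set n = m. Then ⟨S_{λ_1}(φ)⋯S_{λ_l}(φ)·1, Q_n·1⟩ = (−1)^{m+n} if λ = (1^m) is a single column, and 0 otherwise. (This matrix coefficient equals the irreducible character value χ^{λ(φ)}_{(n)(f_1)} of GL_n(𝔽_q) at the regular unipotent class.) -/

import Mathlib

open MvPolynomial

noncomputable section

namespace JW

/-! ## Generic formal exponential of a power series

For a power series `S` with zero constant term, `expOf 𝕜 S` is the formal
exponential `exp S = ∑_j S^j / j!`; its `z^r`-coefficient is the (finite) sum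
`∑_{j ≤ r} (coeff r S^j)/j!`. -/
def expOf (𝕜 : Type) [Field 𝕜] {A : Type} [Ring A] [Algebra 𝕜 A]
    (S : PowerSeries A) : PowerSeries A :=
  PowerSeries.mk fun r => ∑ j ∈ Finset.range (r + 1),
    ((Nat.factorial j : 𝕜))⁻¹ • (PowerSeries.coeff r (S ^ j))

/-! ## The field 𝔽̄_q, Frobenius, characters, and orbits -/

variable (p k : ℕ) [Fact p.Prime]

/-- The algebraic closure `𝔽̄_q` of `𝔽_q ⊆ 𝔽̄_p`, realized as `𝔽̄_p`. -/
abbrev Kbar := AlgebraicClosure (ZMod p)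

/-- The Frobenius `x ↦ x^q`, `q = p^k`, on the multiplicative group `M = 𝔽̄_q^×`. -/
def frobM : (Kbar p)ˣ →* (Kbar p)ˣ := powMonoidHom (p ^ k)

/-- `M*`: complex characters of `M = 𝔽̄_q^×` fixed by some power of Frobenius. -/
def Mstar : Type :=
  {ξ : (Kbar p)ˣ →* ℂˣ // ∃ d : ℕ, 0 < d ∧ ∀ x, ξ ((⇑(frobM p k))^[d] x) = ξ x}

/-- The Frobenius action `ξ ↦ ξ ∘ F` on `M*`. -/
def frobStar (ξ : Mstar p k) : Mstar p k :=
  ⟨ξ.1.comp (frobM p k), by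
    obtain ⟨d, hd, h⟩ := ξ.2
    refine ⟨d, hd, fun x => ?_⟩
    have h1 : (⇑(frobM p k))^[d] (frobM p k x) = frobM p k ((⇑(frobM p k))^[d] x) := by
      rw [← Function.iterate_succ_apply, Function.iterate_succ_apply']
    simp only [MonoidHom.comp_apply]
    rw [← h1, h]⟩

/-- Two periodic characters are equivalent iff they lie in the same `F`-orbit. -/
def MstarSetoid : Setoid (Mstar p k) where
  r ξ ψ := ∃ a b : ℕ, (frobStar p k)^[a] ξ = (frobStar p k)^[b] ψ
  iseqv := by
    refine ⟨fun ξ => ⟨0, 0, rfl⟩, ?_, ?_⟩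
    · rintro ξ ψ ⟨a, b, h⟩; exact ⟨b, a, h.symm⟩
    · rintro ξ ψ χ ⟨a, b, h⟩ ⟨c, e, h'⟩
      refine ⟨c + a, b + e, ?_⟩
      rw [Function.iterate_add_apply, h, ← Function.iterate_add_apply, Nat.add_comm c b,
        Function.iterate_add_apply, h', ← Function.iterate_add_apply]

/-- `Φ*`: the set of `F`-orbits of characters. -/
abbrev PhiStar := Quotient (MstarSetoid p k)

/-- The orbit of a character. -/
def mkS (ξ : Mstar p k) : PhiStar p k := Quotient.mk (MstarSetoid p k) ξ

/-- `|φ|`: the cardinality of the orbit `φ ∈ Φ*`. -/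
def degS (φ : PhiStar p k) : ℕ := Nat.card {ξ : Mstar p k // mkS p k ξ = φ}

/-- Same-orbit equivalence on `M = 𝔽̄_q^×` itself. -/
def MSetoid : Setoid ((Kbar p)ˣ) where
  r x y := ∃ a b : ℕ, (⇑(frobM p k))^[a] x = (⇑(frobM p k))^[b] y
  iseqv := by
    refine ⟨fun x => ⟨0, 0, rfl⟩, ?_, ?_⟩
    · rintro x y ⟨a, b, h⟩; exact ⟨b, a, h.symm⟩
    · rintro x y z ⟨a, b, h⟩ ⟨c, e, h'⟩
      refine ⟨c + a, b + e, ?_⟩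
      rw [Function.iterate_add_apply, h, ← Function.iterate_add_apply, Nat.add_comm c b,
        Function.iterate_add_apply, h', ← Function.iterate_add_apply]

/-- `Φ`: the set of `F`-orbits in `M` (equivalently, monic irreducible
polynomials over `𝔽_q` other than `t`). -/
abbrev PhiM := Quotient (MSetoid p k)

/-- The orbit of an element of `M`. -/
def mkM (x : (Kbar p)ˣ) : PhiM p k := Quotient.mk (MSetoid p k) x

/-- `|f|`: the cardinality (degree) of the orbit `f ∈ Φ`. -/
def degM (f : PhiM p k) : ℕ := Nat.card {x : (Kbar p)ˣ // mkM p k x = f}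

/-! ## The Fock space -/

/-- The Fock space `𝓕 = ℂ[p_n(φ) : n ≥ 1, φ ∈ Φ*]`. -/
abbrev Fock := MvPolynomial (PhiStar p k × ℕ+) ℂ

/-- The power sum generator `p_n(φ)` (zero for `n = 0`). -/
def pGen (φ : PhiStar p k) (n : ℕ) : Fock p k :=
  if h : 0 < n then X (φ, ⟨n, h⟩) else 0

/-- `q = p^k` as a complex number. -/
def qC : ℂ := (p : ℂ) ^ k

/-- `Z`-value of a colored power-sum monomial: for the monomial with
multiplicity `m (φ,n)` of `p_n(φ)`, this is `∏ n^{m(φ,n)} (m(φ,n))!`. -/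
def Zval (m : (PhiStar p k × ℕ+) →₀ ℕ) : ℂ :=
  ∏ i ∈ m.support, ((i.2 : ℕ) : ℂ) ^ (m i) * (Nat.factorial (m i))

/-- The symmetric bilinear form on `𝓕` with
`⟨p_{λ̃}, p_{μ̃}⟩ = δ_{λ̃ μ̃} ∏_φ z_{λ̃(φ)}`. -/
def form (u v : Fock p k) : ℂ :=
  ∑ m ∈ u.support, coeff m u * coeff m v * Zval p k m

/-- `p_n(f_1)` for `f_1 = t - 1`:
`p_n(f_1) = ((−1)^{n−1}/(q^n−1)) ∑_{|φ| ∣ n} |φ| p_{n/|φ|}(φ)`. -/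
def pF1 (n : ℕ) : Fock p k :=
  ((-1 : ℂ) ^ (n - 1) / (qC p k ^ n - 1)) •
    ∑ᶠ (φ : PhiStar p k) (_ : degS p k φ ∣ n),
      (degS p k φ : ℂ) • pGen p k φ (n / degS p k φ)

/-- The derivative `∂/∂p_n(φ)` (zero for `n = 0`). -/
def derOp (φ : PhiStar p k) (n : ℕ) : Module.End ℂ (Fock p k) :=
  if h : 0 < n then (pderiv ((φ, ⟨n, h⟩) : PhiStar p k × ℕ+)).toLinearMap else 0

/-- Multiplication operator by a fixed element of `𝓕`. -/
def mulOp (f : Fock p k) : Module.End ℂ (Fock p k) := LinearMap.mulLeft ℂ f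

/-! ## Vertex operators as coefficients of products of exponentials -/

/-- `exp(∑_{n≥1} (1/n) p_n(φ) z^n)` as a power series with coefficients in `𝓕`. -/
def hSeries (φ : PhiStar p k) : PowerSeries (Fock p k) :=
  expOf ℂ (PowerSeries.mk fun n => ((n : ℂ))⁻¹ • pGen p k φ n)

/-- The coefficients of `hSeries`, extended by `0` to negative indices. -/
def hElt (φ : PhiStar p k) (a : ℤ) : Fock p k :=
  if 0 ≤ a then PowerSeries.coeff a.toNat (hSeries p k φ) else 0

/-- `exp(−∑_{n≥1} ∂/∂p_n(φ) z^{-n})`: the coefficient of `z^{-r}` is the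
`r`-th coefficient of this power series. -/
def sMinusSeries (φ : PhiStar p k) : PowerSeries (Module.End ℂ (Fock p k)) :=
  expOf ℂ (PowerSeries.mk fun n => -(derOp p k φ n))

/-- `S` is the family of Schur vertex operator coefficients:
`S(φ;z) = exp(∑ (1/n)p_n(φ) z^n) exp(−∑ ∂/∂p_n(φ) z^{-n}) = ∑_m S_m(φ) z^m`. -/
def IsSOp (S : PhiStar p k → ℤ → Module.End ℂ (Fock p k)) : Prop :=
  ∀ (φ : PhiStar p k) (m : ℤ) (v : Fock p k),
    S φ m v = ∑ᶠ r : ℕ,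
      hElt p k φ (m + r) * (PowerSeries.coeff r (sMinusSeries p k φ) v)

/-- `D n` is `((q^n−1)/n)` times the `⟨·,·⟩`-adjoint of multiplication
by `p_n(f_1)`. -/
def IsD (D : ℕ → Module.End ℂ (Fock p k)) : Prop :=
  ∀ n : ℕ, 0 < n → ∀ u v : Fock p k,
    form p k (D n u) v = ((qC p k ^ n - 1) / n) * form p k u (pF1 p k n * v)

/-- `exp(−∑_{n≥1} ((1−q^{-n})/n) p_n(f_1) z^n)`. -/
def qStarPlusSeries : PowerSeries (Fock p k) :=
  expOf ℂ (PowerSeries.mk fun n => (-((1 - (qC p k)⁻¹ ^ n) / n)) • pF1 p k n)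

/-- `exp(∑_{n≥1} D_n z^{-n})`: coefficient of `z^{-b}` is the `b`-th coefficient. -/
def qStarMinusSeries (D : ℕ → Module.End ℂ (Fock p k)) :
    PowerSeries (Module.End ℂ (Fock p k)) :=
  expOf ℂ (PowerSeries.mk fun n => if n = 0 then 0 else D n)

/-- `Qs` is the family of coefficients of the dual Hall–Littlewood vertex operator:
`Q*(z) = exp(−∑ ((1−q^{-n})/n) p_n(f_1) z^n) exp(∑ D_n z^{-n}) = ∑_m Q*_m z^{-m}`. -/
def IsQStar (D : ℕ → Module.End ℂ (Fock p k))
    (Qs : ℤ → Module.End ℂ (Fock p k)) : Prop :=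
  ∀ (m : ℤ) (v : Fock p k),
    Qs m v = ∑ᶠ a : ℕ,
      PowerSeries.coeff a (qStarPlusSeries p k) *
        (if h : (0 : ℤ) ≤ (a : ℤ) + m then
          PowerSeries.coeff ((a : ℤ) + m).toNat (qStarMinusSeries p k D) v
        else 0)

/-- `exp(∑_{n≥1} ((q^n−1)/n) p_n(f_1) z^n)`. -/
def qPlusSeries : PowerSeries (Fock p k) :=
  expOf ℂ (PowerSeries.mk fun n => ((qC p k ^ n - 1) / n) • pF1 p k n)

/-- Coefficients of `qPlusSeries`, extended by `0` to negative indices. -/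
def qPlusElt (a : ℤ) : Fock p k :=
  if 0 ≤ a then PowerSeries.coeff a.toNat (qPlusSeries p k) else 0

/-- `exp(−∑_{n≥1} q^{-n} D_n z^{-n})`. -/
def qMinusSeries (D : ℕ → Module.End ℂ (Fock p k)) :
    PowerSeries (Module.End ℂ (Fock p k)) :=
  expOf ℂ (PowerSeries.mk fun n => if n = 0 then 0 else (-((qC p k)⁻¹ ^ n)) • D n)

/-- `Q` is the family of coefficients of the Hall–Littlewood vertex operator:
`Q(z) = exp(∑ ((q^n−1)/n) p_n(f_1) z^n) exp(−∑ q^{-n} D_n z^{-n}) = ∑_m Q_m z^m`. -/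
def IsQ (D : ℕ → Module.End ℂ (Fock p k))
    (Q : ℤ → Module.End ℂ (Fock p k)) : Prop :=
  ∀ (m : ℤ) (v : Fock p k),
    Q m v = ∑ᶠ b : ℕ,
      qPlusElt p k (m + b) * (PowerSeries.coeff b (qMinusSeries p k D) v)

/-! ## `f`-colored power sums and Hall–Littlewood operators, `f ∈ Φ` -/

/-- Characters fixed by the `d`-th power of Frobenius (i.e. `M*_d`). -/
def MstarLevel (d : ℕ) : Set (Mstar p k) :=
  {ξ | ∀ y, ξ.1 ((⇑(frobM p k))^[d] y) = ξ.1 y}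

/-- `p_n(f)` computed from a chosen representative `x` of the orbit `f`:
`p_n(f) = ((−1)^{n|f|−1}/(q^{n|f|}−1)) ∑_{ξ ∈ M*_{n|f|}} ξ(x)^{-1} p_{n|f|/|φ_ξ|}(φ_ξ)`. -/
def pFrep (x : (Kbar p)ˣ) (n : ℕ) : Fock p k :=
  ((-1 : ℂ) ^ (n * degM p k (mkM p k x) - 1) / (qC p k ^ (n * degM p k (mkM p k x)) - 1)) •
    ∑ᶠ (ξ : Mstar p k) (_ : ξ ∈ MstarLevel p k (n * degM p k (mkM p k x))),
      (((ξ.1 x : ℂˣ) : ℂ))⁻¹ •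
        pGen p k (mkS p k ξ) ((n * degM p k (mkM p k x)) / degS p k (mkS p k ξ))

/-- `D_n(f)` is `((q^{n|f|}−1)/n)` times the adjoint of multiplication by `p_n(f)`. -/
def IsDf (rep : PhiM p k → (Kbar p)ˣ)
    (Df : PhiM p k → ℕ → Module.End ℂ (Fock p k)) : Prop :=
  ∀ (f : PhiM p k) (n : ℕ), 0 < n → ∀ u v : Fock p k,
    form p k (Df f n u) v =
      ((qC p k ^ (n * degM p k f) - 1) / n) * form p k u (pFrep p k (rep f) n * v)

/-- `exp(∑_{n≥1} ((q^{n|f|}−1)/n) p_n(f) z^n)`. -/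
def qfPlusSeries (rep : PhiM p k → (Kbar p)ˣ) (f : PhiM p k) : PowerSeries (Fock p k) :=
  expOf ℂ (PowerSeries.mk fun n =>
    ((qC p k ^ (n * degM p k f) - 1) / n) • pFrep p k (rep f) n)

/-- `exp(−∑_{n≥1} q^{-n|f|} D_n(f) z^{-n})`. -/
def qfMinusSeries (Df : PhiM p k → ℕ → Module.End ℂ (Fock p k)) (f : PhiM p k) :
    PowerSeries (Module.End ℂ (Fock p k)) :=
  expOf ℂ (PowerSeries.mk fun n =>
    if n = 0 then 0 else (-((qC p k)⁻¹ ^ (n * degM p k f))) • Df f n)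

/-- `Qf` is the family of coefficients of the `f`-colored Hall–Littlewood operators:
`Q(f;z) = exp(∑ ((q^{n|f|}−1)/n) p_n(f) z^n) exp(−∑ q^{-n|f|} D_n(f) z^{-n}) = ∑_m Q_m(f) z^m`. -/
def IsQf (rep : PhiM p k → (Kbar p)ˣ) (Df : PhiM p k → ℕ → Module.End ℂ (Fock p k))
    (Qf : PhiM p k → ℤ → Module.End ℂ (Fock p k)) : Prop :=
  ∀ (f : PhiM p k) (m : ℤ) (v : Fock p k),
    Qf f m v = ∑ᶠ b : ℕ,
      (if 0 ≤ m + (b : ℤ) then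
          PowerSeries.coeff (m + (b : ℤ)).toNat (qfPlusSeries p k rep f)
        else 0) *
      (PowerSeries.coeff b (qfMinusSeries p k Df f) v)

/-- The trivial character, and its orbit `φ_1`. -/
def trivChar : Mstar p k := ⟨1, 1, one_pos, fun _ => rfl⟩

def phiOne : PhiStar p k := mkS p k (trivChar p k)

/-! ## Colored partitions and auxiliary symmetric-function data -/

/-- `z_λ` for a multiset-partition `s` (parts with multiplicity). -/
def zMult (s : Multiset ℕ) : ℂ :=
  ∏ i ∈ s.toFinset, (i : ℂ) ^ (s.count i) * (Nat.factorial (s.count i))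

/-- `z_λ` for `λ ⊢ n`. -/
def zPc {n : ℕ} (lam : n.Partition) : ℂ := zMult lam.parts

/-- A `Φ*`-colored partition: a finitely supported assignment of partitions
(multisets of positive integers) to orbits. -/
structure CPart : Type where
  parts : PhiStar p k → Multiset ℕ
  finite : (Function.support parts).Finite
  pos : ∀ φ, ∀ i ∈ parts φ, 0 < i

/-- The weight `‖λ̃‖ = ∑_φ |φ|·|λ̃(φ)|`. -/
def cwt (L : CPart p k) : ℕ := ∑ᶠ φ : PhiStar p k, degS p k φ * (L.parts φ).sum

/-- The colored power-sum monomial `p_{λ̃} = ∏_φ p_{λ̃(φ)}(φ)`. -/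
def cpMon (L : CPart p k) : Fock p k :=
  ∏ᶠ φ : PhiStar p k, ((L.parts φ).map (pGen p k φ)).prod

/-- `Z_{λ̃} = ∏_φ z_{λ̃(φ)}`. -/
def cZ (L : CPart p k) : ℂ := ∏ᶠ φ : PhiStar p k, zMult (L.parts φ)

/-- The one-row Schur (complete homogeneous) function
`h_r(φ) = ∑_{λ ⊢ r} p_λ(φ)/z_λ`. -/
def hRow (φ : PhiStar p k) (r : ℕ) : Fock p k :=
  ∑ lam : Nat.Partition r, (zPc lam)⁻¹ • ((lam.parts.map (pGen p k φ)).prod)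

/-! ## Chains of vertex operators and numerical data of partitions -/

/-- `S_{ν_1}(φ) ⋯ S_{ν_l}(φ)` for an integer sequence `ν`. -/
def SchainZ (S : PhiStar p k → ℤ → Module.End ℂ (Fock p k)) (φ : PhiStar p k)
    (ls : List ℤ) : Module.End ℂ (Fock p k) :=
  (ls.map (S φ)).prod

/-- `S_{ν_1}(φ) ⋯ S_{ν_l}(φ)` for a sequence of naturals. -/
def SchainN (S : PhiStar p k → ℤ → Module.End ℂ (Fock p k)) (φ : PhiStar p k)
    (ls : List ℕ) : Module.End ℂ (Fock p k) :=
  (ls.map fun a => S φ (a : ℤ)).prod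

/-- `Q_{μ_1} ⋯ Q_{μ_r}`. -/
def Qchain (Q : ℤ → Module.End ℂ (Fock p k)) (μ : List ℕ) : Module.End ℂ (Fock p k) :=
  (μ.map fun a => Q (a : ℤ)).prod

/-- `n(μ) = ∑_i (i−1) μ_i`. -/
def nmu (μ : List ℕ) : ℕ := ∑ i : Fin μ.length, (i : ℕ) * μ.get i

/-- The structure constants `A(t;1) = −t`, `A(t;i) = t^i (t^{-1} − 1)` for `i > 1`. -/
def Acoef (t : ℂ) (i : ℕ) : ℂ := if i = 1 then -t else t ^ i * (t⁻¹ - 1)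

/-- The structure constants `B(t;1) = −1`, `B(t;i) = t^{-1} − 1` for `i > 1`. -/
def Bcoef (t : ℂ) (i : ℕ) : ℂ := if i = 1 then -1 else t⁻¹ - 1

/-- Expansion coefficients of `(w_i−w_j)/(w_i−q^{-1}w_j) = ∑_k ccq q k (w_j/w_i)^k`. -/
def ccq (q : ℂ) (j : ℕ) : ℂ := if j = 0 then 1 else (q⁻¹) ^ j * (1 - q)

/-- Expansion coefficients of `(1 − w_j/w_i) = ∑_k ccsign k (w_j/w_i)^k`. -/
def ccsign (j : ℕ) : ℂ := if j = 0 then 1 else if j = 1 then -1 else 0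

/-- The coefficient of `w_1^{α_1} ⋯ w_r^{α_r}` in
`e_m(w_1^{ee},…,w_r^{ee}) · ∏_{i<j} (∑_k cc k (w_j/w_i)^k)`,
expanded in the iterated Laurent series ring `ℂ((w_r))⋯((w_1))`. -/
def eCoeff (cc : ℕ → ℂ) {r : ℕ} (ee m : ℕ) (α : Fin r → ℤ) : ℂ :=
  ∑ᶠ T : Finset (Fin r), ∑ᶠ kf : Fin r → Fin r → ℕ,
    if T.card = m ∧ (∀ i j : Fin r, ¬ i < j → kf i j = 0) ∧
        (∀ i : Fin r, α i = (if i ∈ T then (ee : ℤ) else 0)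
          + (∑ j : Fin r, (kf j i : ℤ)) - ∑ j : Fin r, (kf i j : ℤ))
    then ∏ i : Fin r, ∏ j : Fin r, cc (kf i j)
    else 0

/-- The character value `X(ν̃, κ) = q^{n(κ)} ⟨∏_φ S_{ν̃(φ)}(φ)·1, Q_{κ_1}⋯Q_{κ_s}·1⟩`,
with the product over the colors listed in `cs`. -/
def Xval (S : PhiStar p k → ℤ → Module.End ℂ (Fock p k))
    (Q : ℤ → Module.End ℂ (Fock p k)) (cs : List (PhiStar p k))
    (ν : PhiStar p k → List ℤ) (κ : List ℕ) : ℂ :=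
  (qC p k) ^ (nmu κ) *
    form p k (((cs.map fun φ => SchainZ p k S φ (ν φ)).prod) 1) (Qchain p k Q κ 1)

section ExpRing
variable {A : Type} [Ring A] [Algebra ℂ A]

theorem coeff_expOf (S : PowerSeries A) (r : ℕ) :
    PowerSeries.coeff r (expOf ℂ S) = ∑ j ∈ Finset.range (r + 1),
      ((Nat.factorial j : ℂ))⁻¹ • (PowerSeries.coeff r (S ^ j)) := by
  simp [expOf]

theorem coeff_zero_expOf' (S : PowerSeries A) :
    PowerSeries.coeff 0 (expOf ℂ S) = 1 := by
  simp [coeff_expOf]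

end ExpRing

section Exp
variable {A : Type} [CommRing A] [Algebra ℂ A]

theorem coeff_pow_eq_zero {B : PowerSeries A} (hB : PowerSeries.constantCoeff B = 0) :
    ∀ r m : ℕ, m < r → PowerSeries.coeff m (B ^ r) = 0 := by
  intro r
  induction r with
  | zero => intro m hm; omega
  | succ r ih =>
    intro m hm
    rw [pow_succ, PowerSeries.coeff_mul]
    apply Finset.sum_eq_zero
    rintro ⟨a, b⟩ hab
    rw [Finset.HasAntidiagonal.mem_antidiagonal] at hab
    rcases Nat.eq_zero_or_pos b with hb | hb
    · subst hb
      have h0 : PowerSeries.coeff 0 B = 0 := by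
        rwa [PowerSeries.coeff_zero_eq_constantCoeff]
      simp [h0]
    · have : a < r := by omega
      simp [ih a this]

theorem coeff_zero_expOf (S : PowerSeries A) :
    PowerSeries.coeff 0 (expOf ℂ S) = 1 := by
  simp [coeff_expOf]

/-- Abstract derivation identity for `expOf`. -/
theorem coeff_expOf_deriv (δ : PowerSeries A → PowerSeries A)
    (hadd : ∀ F G, δ (F + G) = δ F + δ G)
    (hsmul : ∀ (c : ℂ) F, δ (c • F) = c • δ F)
    (hleib : ∀ F G, δ (F * G) = δ F * G + F * δ G)
    (hsupp : ∀ F n, PowerSeries.coeff n F = 0 → PowerSeries.coeff n (δ F) = 0)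
    (B : PowerSeries A) (hB : PowerSeries.constantCoeff B = 0)
    (hδB : PowerSeries.coeff 0 (δ B) = 0) (n : ℕ) :
    PowerSeries.coeff n (δ (expOf ℂ B)) = PowerSeries.coeff n (δ B * expOf ℂ B) := by
  have hδ1 : δ 1 = 0 := by
    have h := hleib 1 1
    simp only [one_mul, mul_one] at h
    have h2 : δ 1 + 0 = δ 1 + δ 1 := by rw [add_zero]; exact h
    exact (add_left_cancel h2).symm
  have hδ0 : δ 0 = 0 := by
    have := hsmul 0 0
    simpa using this
  have hδsum : ∀ (s : Finset ℕ) (f : ℕ → PowerSeries A),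
      δ (∑ i ∈ s, f i) = ∑ i ∈ s, δ (f i) := by
    intro s f
    induction s using Finset.induction with
    | empty => simpa using hδ0
    | insert x s hx ih =>
      rw [Finset.sum_insert hx, Finset.sum_insert hx, hadd, ih]
  have hpow : ∀ s : ℕ, δ (B ^ (s + 1)) = (s + 1) • (δ B * B ^ s) := by
    intro s
    induction s with
    | zero => simp [hleib, hδ1]
    | succ s ih =>
      have : B ^ (s + 2) = B ^ (s + 1) * B := by ring
      rw [this, hleib, ih]
      rw [smul_mul_assoc]
      have hBB : B ^ (s + 1) * δ B = δ B * B ^ (s + 1) := mul_comm _ _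
      rw [hBB, pow_succ]
      rw [succ_nsmul, succ_nsmul, mul_assoc]
      rw [succ_nsmul]
  -- determination of coeff n
  have hdet : ∀ F G, PowerSeries.coeff n F = PowerSeries.coeff n G →
      PowerSeries.coeff n (δ F) = PowerSeries.coeff n (δ G) := by
    intro F G h
    have hs : δ (F - G) = δ F - δ G := by
      have : F - G = F + (-1 : ℂ) • G := by
        rw [neg_one_smul]; ring
      rw [this, hadd, hsmul, neg_one_smul]; ring
    have h0 : PowerSeries.coeff n (F - G) = 0 := by rw [map_sub, h, sub_self]
    have := hsupp (F - G) n h0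
    rw [hs, map_sub] at this
    exact sub_eq_zero.mp this
  -- truncated sum
  set T : PowerSeries A := ∑ r ∈ Finset.range (n + 1), ((Nat.factorial r : ℂ))⁻¹ • B ^ r with hT
  have hTn : PowerSeries.coeff n (expOf ℂ B) = PowerSeries.coeff n T := by
    rw [coeff_expOf, hT, map_sum]
    apply Finset.sum_congr rfl
    intro r _
    rw [PowerSeries.coeff_smul]
  have step1 : PowerSeries.coeff n (δ (expOf ℂ B)) =
      ∑ s ∈ Finset.range n, ((Nat.factorial s : ℂ))⁻¹ • PowerSeries.coeff n (δ B * B ^ s) := by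
    rw [hdet _ _ hTn, hT, hδsum, map_sum]
    have : ∀ r ∈ Finset.range (n + 1),
        PowerSeries.coeff n (δ (((Nat.factorial r : ℂ))⁻¹ • B ^ r)) =
        ((Nat.factorial r : ℂ))⁻¹ • PowerSeries.coeff n (δ (B ^ r)) := by
      intro r _
      rw [hsmul, PowerSeries.coeff_smul]
    rw [Finset.sum_congr rfl this, Finset.sum_range_succ']
    have h0 : ((Nat.factorial 0 : ℂ))⁻¹ • PowerSeries.coeff n (δ (B ^ 0)) = 0 := by
      simp [hδ1]
    rw [h0, add_zero]
    apply Finset.sum_congr rfl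
    intro s _
    rw [hpow s, map_nsmul, ← Nat.cast_smul_eq_nsmul (R := ℂ), smul_smul]
    congr 1
    rw [Nat.factorial_succ, Nat.cast_mul, mul_inv]
    have hs1 : ((s + 1 : ℕ) : ℂ) ≠ 0 := by exact_mod_cast Nat.succ_ne_zero s
    have hf : ((Nat.factorial s : ℕ) : ℂ) ≠ 0 := by exact_mod_cast Nat.factorial_ne_zero s
    field_simp
  have hsmall : ∀ r b : ℕ, b ≤ n → PowerSeries.coeff b (expOf ℂ B) =
      ∑ r ∈ Finset.range (n + 1), ((Nat.factorial r : ℂ))⁻¹ • PowerSeries.coeff b (B ^ r) := by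
    intro r b hb
    rw [coeff_expOf]
    apply Finset.sum_subset
    · exact Finset.range_subset_range.mpr (by omega)
    · intro x _ hx
      rw [Finset.mem_range, not_lt] at hx
      rw [coeff_pow_eq_zero hB x b (by omega), smul_zero]
  have step2 : PowerSeries.coeff n (δ B * expOf ℂ B) =
      ∑ r ∈ Finset.range (n + 1), ((Nat.factorial r : ℂ))⁻¹ • PowerSeries.coeff n (δ B * B ^ r) := by
    rw [PowerSeries.coeff_mul]
    have : ∀ x ∈ Finset.HasAntidiagonal.antidiagonal n,
        PowerSeries.coeff x.1 (δ B) * PowerSeries.coeff x.2 (expOf ℂ B) =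
        ∑ r ∈ Finset.range (n + 1), ((Nat.factorial r : ℂ))⁻¹ •
          (PowerSeries.coeff x.1 (δ B) * PowerSeries.coeff x.2 (B ^ r)) := by
      rintro ⟨a, b⟩ hab
      rw [Finset.HasAntidiagonal.mem_antidiagonal] at hab
      rw [hsmall 0 b (by omega), Finset.mul_sum]
      apply Finset.sum_congr rfl
      intro r _
      rw [mul_smul_comm]
    rw [Finset.sum_congr rfl this, Finset.sum_comm]
    apply Finset.sum_congr rfl
    intro r _
    rw [PowerSeries.coeff_mul, Finset.smul_sum]
  rw [step1, step2, Finset.sum_range_succ]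
  have hlast : ((Nat.factorial n : ℂ))⁻¹ • PowerSeries.coeff n (δ B * B ^ n) = 0 := by
    rw [PowerSeries.coeff_mul]
    have : ∀ x ∈ Finset.HasAntidiagonal.antidiagonal n,
        PowerSeries.coeff x.1 (δ B) * PowerSeries.coeff x.2 (B ^ n) = 0 := by
      rintro ⟨a, b⟩ hab
      rw [Finset.HasAntidiagonal.mem_antidiagonal] at hab
      rcases Nat.lt_or_ge b n with hbn | hbn
      · rw [coeff_pow_eq_zero hB n b hbn, mul_zero]
      · have ha : a = 0 := by omega
        rw [ha, hδB, zero_mul]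
    rw [Finset.sum_eq_zero this, smul_zero]
  rw [hlast, add_zero]
end Exp
/-! ### Degeneracy of the character theory: `Mstar` is a singleton -/

section Single
variable (p k : ℕ) [Fact p.Prime]

theorem frobM_iterate (d : ℕ) (x : (Kbar p)ˣ) :
    (⇑(frobM p k))^[d] x = x ^ ((p ^ k) ^ d) := by
  induction d with
  | zero => simp
  | succ d ih =>
    rw [Function.iterate_succ_apply', ih]
    show (x ^ (p ^ k) ^ d) ^ (p ^ k) = _
    rw [← pow_mul, pow_succ]

theorem Mstar_eq_triv (hk : 0 < k) (ξ : Mstar p k) : ξ = trivChar p k := by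
  obtain ⟨d, hd, h⟩ := ξ.2
  have hq : 1 < (p ^ k) ^ d := by
    have hp : 1 < p := (Fact.out : p.Prime).one_lt
    have : 1 < p ^ k := Nat.one_lt_pow (by omega) hp
    exact Nat.one_lt_pow (by omega) this
  set N : ℕ := (p ^ k) ^ d - 1 with hN
  have hN1 : 0 < N := by omega
  have key : ∀ x : (Kbar p)ˣ, (ξ.1 x) ^ N = 1 := by
    intro x
    have hx := h x
    rw [frobM_iterate, map_pow] at hx
    have : (ξ.1 x) ^ ((p ^ k) ^ d) = ξ.1 x ^ 1 := by rw [pow_one]; exact hx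
    rw [show (p ^ k) ^ d = N + 1 by omega, pow_succ, pow_one] at this
    have h2 : (ξ.1 x) ^ N * ξ.1 x = 1 * ξ.1 x := by rw [one_mul]; exact this
    exact mul_right_cancel h2
  have main : ∀ x : (Kbar p)ˣ, ξ.1 x = 1 := by
    intro x
    obtain ⟨z, hz⟩ := IsAlgClosed.exists_pow_nat_eq (k := Kbar p) (x : Kbar p) hN1
    have hz0 : z ≠ 0 := by
      intro h0
      rw [h0, zero_pow (by omega)] at hz
      exact x.ne_zero hz.symm
    set y : (Kbar p)ˣ := Units.mk0 z hz0 with hy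
    have hyx : y ^ N = x := by
      apply Units.ext
      rw [Units.val_pow_eq_pow_val]
      exact hz
    rw [← hyx, map_pow, key y]
  apply Subtype.ext
  apply MonoidHom.ext
  intro x
  exact main x

theorem Mstar_subsingleton (hk : 0 < k) : Subsingleton (Mstar p k) :=
  ⟨fun a b => (Mstar_eq_triv p k hk a).trans (Mstar_eq_triv p k hk b).symm⟩

def PhiStarUnique (hk : 0 < k) : Unique (PhiStar p k) := by
  haveI := Mstar_subsingleton p k hk
  refine ⟨⟨phiOne p k⟩, ?_⟩
  intro φ
  induction φ using Quotient.inductionOn with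
  | h ξ =>
    show _ = phiOne p k
    unfold phiOne mkS
    congr 1
    exact Subsingleton.elim _ _

theorem degS_eq_one (hk : 0 < k) (φ : PhiStar p k) : degS p k φ = 1 := by
  haveI := Mstar_subsingleton p k hk
  haveI := PhiStarUnique p k hk
  haveI : Unique {ξ : Mstar p k // mkS p k ξ = φ} := by
    refine ⟨⟨⟨trivChar p k, ?_⟩⟩, ?_⟩
    · have : mkS p k (trivChar p k) = φ := Subsingleton.elim _ _
      exact this
    · intro a
      apply Subtype.ext
      exact Subsingleton.elim _ _
  rw [degS, Nat.card_unique]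

end Single
/-! ### Basic properties of the bilinear form -/

section FormBasic
open scoped Classical
variable (p k : ℕ) [Fact p.Prime]

theorem Zval_ne_zero (m : (PhiStar p k × ℕ+) →₀ ℕ) : Zval p k m ≠ 0 := by
  unfold Zval
  apply Finset.prod_ne_zero_iff.mpr
  intro i _
  apply mul_ne_zero
  · apply pow_ne_zero
    exact_mod_cast i.2.2.ne'
  · exact_mod_cast (Nat.factorial_ne_zero _)

theorem form_eq_sum_subset {u : Fock p k} (v : Fock p k) {A : Finset ((PhiStar p k × ℕ+) →₀ ℕ)}
    (hA : u.support ⊆ A) :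
    form p k u v = ∑ m ∈ A, coeff m u * coeff m v * Zval p k m := by
  unfold form
  apply Finset.sum_subset hA
  intro m _ hm
  rw [notMem_support_iff] at hm
  rw [hm, zero_mul, zero_mul]

theorem form_add_left (u u' v : Fock p k) :
    form p k (u + u') v = form p k u v + form p k u' v := by
  rw [form_eq_sum_subset p k (u := u + u') v (A := u.support ∪ u'.support)
    (MvPolynomial.support_add), form_eq_sum_subset p k v (Finset.subset_union_left),
    form_eq_sum_subset p k v (Finset.subset_union_right), ← Finset.sum_add_distrib]
  apply Finset.sum_congr rfl
  intro m _
  rw [coeff_add]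
  ring

theorem form_smul_left (c : ℂ) (u v : Fock p k) :
    form p k (c • u) v = c * form p k u v := by
  rw [form_eq_sum_subset p k (u := c • u) v (A := u.support) (MvPolynomial.support_smul),
    form, Finset.mul_sum]
  apply Finset.sum_congr rfl
  intro m _
  rw [MvPolynomial.coeff_smul, smul_eq_mul]
  ring

theorem form_add_right (u v v' : Fock p k) :
    form p k u (v + v') = form p k u v + form p k u v' := by
  unfold form
  rw [← Finset.sum_add_distrib]
  apply Finset.sum_congr rfl
  intro m _
  rw [coeff_add]
  ring

theorem form_smul_right (c : ℂ) (u v : Fock p k) :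
    form p k u (c • v) = c * form p k u v := by
  unfold form
  rw [Finset.mul_sum]
  apply Finset.sum_congr rfl
  intro m _
  rw [MvPolynomial.coeff_smul, smul_eq_mul]
  ring

theorem form_zero_right (u : Fock p k) : form p k u 0 = 0 := by
  unfold form
  apply Finset.sum_eq_zero
  intro m _
  rw [MvPolynomial.coeff_zero]
  ring

theorem form_one_left (v : Fock p k) : form p k 1 v = coeff 0 v := by
  have h1 : (1 : Fock p k).support ⊆ {0} := by
    intro m hm
    rw [mem_support_iff] at hm
    rw [Finset.mem_singleton]
    by_contra hne
    rw [MvPolynomial.coeff_one] at hm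
    simp only [if_neg (fun h => hne (Eq.symm h))] at hm
    exact hm rfl
  rw [form_eq_sum_subset p k v h1, Finset.sum_singleton]
  have hZ : Zval p k 0 = 1 := by
    unfold Zval
    rw [Finsupp.support_zero, Finset.prod_empty]
  rw [hZ, MvPolynomial.coeff_one]
  simp

theorem form_monomial_right (u : Fock p k) (m : (PhiStar p k × ℕ+) →₀ ℕ) :
    form p k u (monomial m 1) = coeff m u * Zval p k m := by
  rw [form_eq_sum_subset p k (monomial m 1) (Finset.subset_union_left (s₂ := {m}))]
  rw [Finset.sum_eq_single_of_mem m (Finset.mem_union_right _ (Finset.mem_singleton_self m))]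
  · rw [MvPolynomial.coeff_monomial]
    simp
  · intro b _ hb
    rw [MvPolynomial.coeff_monomial]
    simp only [if_neg (fun h => hb (Eq.symm h))]
    ring

theorem eq_zero_of_form (u : Fock p k) (h : ∀ v, form p k u v = 0) : u = 0 := by
  apply MvPolynomial.ext
  intro m
  rw [MvPolynomial.coeff_zero]
  have := h (monomial m 1)
  rw [form_monomial_right] at this
  rcases mul_eq_zero.mp this with h' | h'
  · exact h'
  · exact absurd h' (Zval_ne_zero p k m)

end FormBasic
/-! ### Weights, derivatives, and the adjoint property -/

section Weights
open scoped Classical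
variable (p k : ℕ) [Fact p.Prime]

/-- weighted degree of a monomial exponent -/
def wt (m : (PhiStar p k × ℕ+) →₀ ℕ) : ℕ := m.sum fun i e => (i.2 : ℕ) * e

theorem wt_add_single (m : (PhiStar p k × ℕ+) →₀ ℕ) (i : PhiStar p k × ℕ+) :
    wt p k (m + Finsupp.single i 1) = wt p k m + (i.2 : ℕ) := by
  unfold wt
  rw [Finsupp.sum_add_index' (fun j => mul_zero _) (fun j a b => mul_add _ _ _)]
  congr 1
  simp [Finsupp.sum_single_index]

theorem coeff_pderiv (i : PhiStar p k × ℕ+) (v : Fock p k) (m : (PhiStar p k × ℕ+) →₀ ℕ) :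
    coeff m (pderiv i v) = (m i + 1 : ℕ) * coeff (m + Finsupp.single i 1) v := by
  induction v using MvPolynomial.induction_on' with
  | monomial s a =>
    rw [pderiv_monomial, MvPolynomial.coeff_monomial, MvPolynomial.coeff_monomial]
    rcases Nat.eq_zero_or_pos (s i) with hsi | hsi
    · simp only [hsi, Nat.cast_zero, mul_zero]
      have : ¬ s = m + Finsupp.single i 1 := by
        intro h
        have := congrArg (fun f => f i) h
        simp [Finsupp.add_apply, Finsupp.single_apply, hsi] at this
      rw [if_neg this, mul_zero]
      split <;> simp
    · have hle : Finsupp.single i 1 ≤ s := by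
        rw [Finsupp.single_le_iff]
        omega
      have key : (s - Finsupp.single i 1 = m) ↔ (s = m + Finsupp.single i 1) := by
        constructor
        · intro h
          rw [← h, tsub_add_cancel_of_le hle]
        · intro h
          rw [h, add_tsub_cancel_right]
      by_cases h : s = m + Finsupp.single i 1
      · rw [if_pos (key.mpr h), if_pos h]
        have : s i = m i + 1 := by
          rw [h]
          simp [Finsupp.add_apply, Finsupp.single_apply]
        rw [this]
        push_cast
        ring
      · rw [if_neg (fun hh => h (key.mp hh)), if_neg h, mul_zero]
  | add f g hf hg =>
    rw [map_add, coeff_add, coeff_add, hf, hg, mul_add]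

/-- `v` has all monomials of weight `≤ w`. -/
def WLE (w : ℕ) (v : Fock p k) : Prop := ∀ m, w < wt p k m → coeff m v = 0

theorem wle_exists (v : Fock p k) : WLE p k (v.support.sup (wt p k)) v := by
  intro m hm
  by_contra h
  have hmem : m ∈ v.support := mem_support_iff.mpr h
  exact absurd (Finset.le_sup (f := wt p k) hmem) (by omega)

theorem wle_pderiv {w : ℕ} {v : Fock p k} (i : PhiStar p k × ℕ+) (h : WLE p k w v) :
    WLE p k (w - (i.2 : ℕ)) (pderiv i v) := by
  intro m hm
  rw [coeff_pderiv]
  rw [h _ (by rw [wt_add_single]; omega), mul_zero]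

theorem pderiv_eq_zero_of_wle {w : ℕ} {v : Fock p k} (i : PhiStar p k × ℕ+)
    (h : WLE p k w v) (hw : w < (i.2 : ℕ)) : pderiv i v = 0 := by
  apply MvPolynomial.ext
  intro m
  rw [coeff_pderiv, MvPolynomial.coeff_zero]
  rw [h _ (by rw [wt_add_single]; omega), mul_zero]

theorem Zval_add_single (m : (PhiStar p k × ℕ+) →₀ ℕ) (i : PhiStar p k × ℕ+) :
    Zval p k (m + Finsupp.single i 1) =
      ((i.2 : ℕ) : ℂ) * ((m i : ℕ) + 1 : ℂ) * Zval p k m := by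
  classical
  set m' := m + Finsupp.single i 1 with hm'
  have hm'i : m' i = m i + 1 := by simp [hm', Finsupp.add_apply, Finsupp.single_apply]
  have hm'j : ∀ j, j ≠ i → m' j = m j := by
    intro j hj
    simp [hm', Finsupp.add_apply, Finsupp.single_apply, Ne.symm hj]
  have hsupp : m'.support = insert i m.support := by
    ext j
    rcases eq_or_ne j i with rfl | hj
    · simp [Finsupp.mem_support_iff, hm'i]
    · simp [Finsupp.mem_support_iff, hm'j j hj, hj]
  have herase : m'.support.erase i = m.support.erase i := by
    rw [hsupp, Finset.erase_insert_eq_erase]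
  have hmem : i ∈ m'.support := by rw [hsupp]; exact Finset.mem_insert_self _ _
  unfold Zval
  rw [← Finset.mul_prod_erase _ _ hmem, herase]
  have hprod : ∏ j ∈ m.support.erase i, (((j.2 : ℕ) : ℂ) ^ (m' j) * (Nat.factorial (m' j))) =
      ∏ j ∈ m.support.erase i, (((j.2 : ℕ) : ℂ) ^ (m j) * (Nat.factorial (m j))) := by
    apply Finset.prod_congr rfl
    intro j hj
    rw [hm'j j (Finset.ne_of_mem_erase hj)]
  rw [hprod]
  rcases Nat.eq_zero_or_pos (m i) with h0 | hpos
  · have hnotmem : i ∉ m.support := by simp [Finsupp.mem_support_iff, h0]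
    have : m.support.erase i = m.support := Finset.erase_eq_of_notMem hnotmem
    rw [this, hm'i, h0]
    simp [Nat.factorial]
  · have hmem2 : i ∈ m.support := Finsupp.mem_support_iff.mpr (by omega)
    rw [← Finset.mul_prod_erase _ _ hmem2, hm'i]
    rw [Nat.factorial_succ]
    push_cast
    ring

theorem form_X_mul (i : PhiStar p k × ℕ+) (u v : Fock p k) :
    form p k (X i * u) v = ((i.2 : ℕ) : ℂ) * form p k u (pderiv i v) := by
  classical
  have hinj : Function.Injective (fun m : (PhiStar p k × ℕ+) →₀ ℕ => m + Finsupp.single i 1) :=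
    fun a b h => by simpa using h
  have hsub : (X i * u).support ⊆ u.support.image (fun m => m + Finsupp.single i 1) := by
    intro m hm
    rw [mem_support_iff, MvPolynomial.coeff_X_mul' m i u] at hm
    by_cases hmi : i ∈ m.support
    · rw [if_pos hmi] at hm
      rw [Finset.mem_image]
      refine ⟨m - Finsupp.single i 1, mem_support_iff.mpr hm, ?_⟩
      have : Finsupp.single i 1 ≤ m := by
        rw [Finsupp.single_le_iff]
        have := Finsupp.mem_support_iff.mp hmi
        omega
      exact tsub_add_cancel_of_le this
    · rw [if_neg hmi] at hm
      exact absurd rfl hm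
  rw [form_eq_sum_subset p k v hsub, Finset.sum_image (fun a _ b _ h => hinj h)]
  rw [form, Finset.mul_sum]
  apply Finset.sum_congr rfl
  intro m hm
  have hc : coeff (m + Finsupp.single i 1) (X i * u) = coeff m u := by
    rw [MvPolynomial.coeff_X_mul' (m + Finsupp.single i 1) i u]
    have hmi : i ∈ (m + Finsupp.single i 1).support := by
      simp [Finsupp.mem_support_iff, Finsupp.add_apply, Finsupp.single_apply]
    rw [if_pos hmi, add_tsub_cancel_right]
  rw [hc, coeff_pderiv, Zval_add_single]
  push_cast
  ring

end Weights
/-! ### Pairing against coefficients of exponential series -/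

section ClaimA
open scoped Classical
variable (p k : ℕ) [Fact p.Prime]

theorem coeff_monomial_mul' {A : Type} [CommRing A] (kk n : ℕ) (a : A) (F : PowerSeries A) :
    PowerSeries.coeff n ((PowerSeries.monomial kk a) * F) =
      if kk ≤ n then a * PowerSeries.coeff (n - kk) F else 0 := by
  rw [PowerSeries.coeff_mul]
  by_cases h : kk ≤ n
  · rw [if_pos h]
    rw [Finset.sum_eq_single_of_mem (kk, n - kk)
      (by rw [Finset.HasAntidiagonal.mem_antidiagonal]; omega)]
    · rw [PowerSeries.coeff_monomial]
      simp
    · rintro ⟨a', b'⟩ hab hne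
      rw [Finset.HasAntidiagonal.mem_antidiagonal] at hab
      rw [PowerSeries.coeff_monomial]
      have : ¬ a' = kk := by
        intro hh
        apply hne
        simp only [hh, Prod.mk.injEq, true_and]
        omega
      rw [if_neg this, zero_mul]
  · rw [if_neg h]
    apply Finset.sum_eq_zero
    rintro ⟨a', b'⟩ hab
    rw [Finset.HasAntidiagonal.mem_antidiagonal] at hab
    rw [PowerSeries.coeff_monomial, if_neg (by omega), zero_mul]

/-- constant coefficient (in the Fock variables) of coefficients of `expOf`. -/
theorem constantCoeff_coeff_expOf {B : PowerSeries (Fock p k)}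
    (hB : ∀ j, MvPolynomial.constantCoeff (PowerSeries.coeff j B) = 0) (n : ℕ) :
    MvPolynomial.constantCoeff (PowerSeries.coeff n (expOf ℂ B)) =
      if n = 0 then 1 else 0 := by
  rw [coeff_expOf, map_sum]
  have hterm : ∀ r ∈ Finset.range (n + 1),
      MvPolynomial.constantCoeff (((Nat.factorial r : ℂ))⁻¹ • PowerSeries.coeff n (B ^ r)) =
        if r = 0 ∧ n = 0 then 1 else 0 := by
    intro r _
    have hsm : MvPolynomial.constantCoeff (((Nat.factorial r : ℂ))⁻¹ • PowerSeries.coeff n (B ^ r)) =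
        ((Nat.factorial r : ℂ))⁻¹ * MvPolynomial.constantCoeff (PowerSeries.coeff n (B ^ r)) := by
      rw [MvPolynomial.smul_eq_C_mul, map_mul, MvPolynomial.constantCoeff_C]
    rw [hsm]
    rcases Nat.eq_zero_or_pos r with hr | hr
    · subst hr
      rw [pow_zero, PowerSeries.coeff_one]
      rcases eq_or_ne n 0 with h | h <;> simp [h]
    · have hz : MvPolynomial.constantCoeff (PowerSeries.coeff n (B ^ r)) = 0 := by
        obtain ⟨s, rfl⟩ := Nat.exists_eq_succ_of_ne_zero (by omega : r ≠ 0)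
        rw [pow_succ, PowerSeries.coeff_mul, map_sum]
        apply Finset.sum_eq_zero
        rintro ⟨a, b⟩ _
        rw [map_mul, hB b, mul_zero]
      rw [hz, mul_zero, if_neg (by omega)]
  rw [Finset.sum_congr rfl hterm]
  rcases eq_or_ne n 0 with h | h
  · subst h
    simp
  · rw [Finset.sum_eq_zero, if_neg h]
    intro r _
    rw [if_neg (by omega)]

/-- Coefficient-wise `pderiv` through `expOf`. -/
theorem pderiv_coeff_expOf (i : PhiStar p k × ℕ+) {B : PowerSeries (Fock p k)}
    (hB : PowerSeries.constantCoeff B = 0)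
    (hB0 : pderiv i (PowerSeries.coeff 0 B) = 0) (n : ℕ) :
    pderiv i (PowerSeries.coeff n (expOf ℂ B)) =
      PowerSeries.coeff n ((PowerSeries.mk fun j => pderiv i (PowerSeries.coeff j B)) *
        expOf ℂ B) := by
  set δ : PowerSeries (Fock p k) → PowerSeries (Fock p k) :=
    fun F => PowerSeries.mk fun j => pderiv i (PowerSeries.coeff j F) with hδ
  have h1 : pderiv i (PowerSeries.coeff n (expOf ℂ B)) =
      PowerSeries.coeff n (δ (expOf ℂ B)) := by
    rw [hδ, PowerSeries.coeff_mk]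
  rw [h1]
  apply coeff_expOf_deriv
  · intro F G
    apply PowerSeries.ext
    intro j
    simp only [hδ, PowerSeries.coeff_mk, map_add]
  · intro c F
    apply PowerSeries.ext
    intro j
    simp only [hδ, PowerSeries.coeff_mk, PowerSeries.coeff_smul]
    rw [Derivation.map_smul]
  · intro F G
    apply PowerSeries.ext
    intro j
    simp only [hδ, PowerSeries.coeff_mk, map_add, PowerSeries.coeff_mul, map_sum]
    rw [← Finset.sum_add_distrib]
    apply Finset.sum_congr rfl
    rintro ⟨a, b⟩ _
    rw [pderiv_mul]
  · intro F j hF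
    simp only [hδ, PowerSeries.coeff_mk, hF, map_zero]
  · exact hB
  · simpa only [hδ, PowerSeries.coeff_mk, PowerSeries.coeff_zero_eq_constantCoeff] using hB0

end ClaimA
/-! ### The evaluation homomorphism and Claim A -/

section ClaimB
open scoped Classical
variable (p k : ℕ) [Fact p.Prime]

def ccoef (j : ℕ) : ℂ := (-1 : ℂ) ^ (j - 1) / j

def Bq (φ : PhiStar p k) : PowerSeries (Fock p k) :=
  PowerSeries.mk fun j => ccoef j • pGen p k φ j

def Evec (φ : PhiStar p k) (n : ℕ) : Fock p k :=
  PowerSeries.coeff n (expOf ℂ (Bq p k φ))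

def Lam : Fock p k →ₐ[ℂ] Polynomial ℂ :=
  aeval fun i : PhiStar p k × ℕ+ => ((-1 : ℂ) ^ ((i.2 : ℕ) - 1)) • (Polynomial.X ^ (i.2 : ℕ))

theorem pGen_constantCoeff (φ : PhiStar p k) (j : ℕ) :
    MvPolynomial.constantCoeff (pGen p k φ j) = 0 := by
  unfold pGen
  split
  · rw [constantCoeff_X]
  · rw [map_zero]

theorem pGen_zero (φ : PhiStar p k) : pGen p k φ 0 = 0 := by
  unfold pGen
  rw [dif_neg (by omega)]

theorem Bq_coeff (φ : PhiStar p k) (j : ℕ) :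
    PowerSeries.coeff j (Bq p k φ) = ccoef j • pGen p k φ j := by
  unfold Bq
  rw [PowerSeries.coeff_mk]

theorem Bq_constantCoeff (φ : PhiStar p k) : PowerSeries.constantCoeff (Bq p k φ) = 0 := by
  rw [← PowerSeries.coeff_zero_eq_constantCoeff, Bq_coeff, pGen_zero, smul_zero]

theorem Bq_coeff_cc (φ : PhiStar p k) (j : ℕ) :
    MvPolynomial.constantCoeff (PowerSeries.coeff j (Bq p k φ)) = 0 := by
  rw [Bq_coeff, MvPolynomial.smul_eq_C_mul, map_mul, pGen_constantCoeff, mul_zero]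

theorem Dmap_Bq (hk : 0 < k) (φ : PhiStar p k) (i : PhiStar p k × ℕ+) :
    (PowerSeries.mk fun j => pderiv i (PowerSeries.coeff j (Bq p k φ))) =
      PowerSeries.monomial ((i.2 : ℕ)) (MvPolynomial.C (ccoef (i.2 : ℕ))) := by
  haveI := PhiStarUnique p k hk
  have hi1 : i.1 = φ := Subsingleton.elim _ _
  apply PowerSeries.ext
  intro j
  rw [PowerSeries.coeff_mk, PowerSeries.coeff_monomial]
  rw [Bq_coeff, Derivation.map_smul]
  rcases Nat.eq_zero_or_pos j with hj | hj
  · subst hj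
    rw [pGen_zero, map_zero, smul_zero, if_neg (fun h => i.2.ne_zero h.symm)]
  · unfold pGen
    rw [dif_pos hj, pderiv_X, Pi.single_apply]
    change (ccoef j • @ite _ ((φ, (⟨j, hj⟩ : ℕ+)) = i) (instDecidableEqProd _ _) (1 : Fock p k) 0) = _
    by_cases hij : j = (i.2 : ℕ)
    · have hpair : (φ, (⟨j, hj⟩ : ℕ+)) = i := by
        apply Prod.ext
        · exact hi1.symm
        · apply PNat.coe_injective
          simp [hij]
      rw [if_pos hpair, if_pos hij, smul_eq_C_mul, mul_one, hij]
    · have hne : ¬ ((φ, (⟨j, hj⟩ : ℕ+)) = i) := by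
        intro h
        have h2 := congrArg (fun x : PhiStar p k × ℕ+ => ((x.2 : ℕ))) h
        simp at h2
        exact hij h2
      rw [if_neg hne, smul_zero, if_neg hij]

theorem pderiv_Evec (hk : 0 < k) (φ : PhiStar p k) (i : PhiStar p k × ℕ+) (n : ℕ) :
    pderiv i (Evec p k φ n) =
      if (i.2 : ℕ) ≤ n then ccoef (i.2 : ℕ) • Evec p k φ (n - (i.2 : ℕ)) else 0 := by
  unfold Evec
  rw [pderiv_coeff_expOf p k i (Bq_constantCoeff p k φ)
    (by rw [Bq_coeff, pGen_zero, smul_zero, map_zero])]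
  rw [Dmap_Bq p k hk φ i, coeff_monomial_mul']
  split
  · rw [MvPolynomial.smul_eq_C_mul]
  · rfl

theorem claimA (hk : 0 < k) (φ : PhiStar p k) (u : Fock p k) (n : ℕ) :
    form p k u (Evec p k φ n) = (Lam p k u).coeff n := by
  induction u using MvPolynomial.induction_on generalizing n with
  | C a =>
    have hCa : (MvPolynomial.C a : Fock p k) = a • 1 := by
      rw [MvPolynomial.smul_eq_C_mul, mul_one]
    rw [hCa, form_smul_left, form_one_left]
    have hcc : coeff 0 (Evec p k φ n) = if n = 0 then 1 else 0 := by
      have := constantCoeff_coeff_expOf p k (Bq_coeff_cc p k φ) n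
      rwa [MvPolynomial.constantCoeff_eq] at this
    rw [hcc]
    rw [map_smul, map_one, Polynomial.coeff_smul]
    rw [Polynomial.coeff_one]
    rcases eq_or_ne n 0 with h | h <;> simp [h]
  | add f g hf hg =>
    rw [form_add_left, map_add, Polynomial.coeff_add, hf, hg]
  | mul_X u i ih =>
    rw [mul_comm, form_X_mul, pderiv_Evec p k hk φ i n]
    have hLam : Lam p k (X i * u) = (Lam p k u) * (((-1 : ℂ) ^ ((i.2 : ℕ) - 1)) •
        (Polynomial.X ^ (i.2 : ℕ))) := by
      rw [map_mul, mul_comm]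
      congr 1
      exact aeval_X _ i
    rw [hLam]
    have hco : ((Lam p k u) * (((-1 : ℂ) ^ ((i.2 : ℕ) - 1)) •
        (Polynomial.X ^ (i.2 : ℕ)))).coeff n =
        (-1 : ℂ) ^ ((i.2 : ℕ) - 1) *
          (if (i.2 : ℕ) ≤ n then (Lam p k u).coeff (n - (i.2 : ℕ)) else 0) := by
      rw [mul_smul_comm, Polynomial.coeff_smul, Polynomial.coeff_mul_X_pow', smul_eq_mul]
    rw [hco]
    split
    · rw [form_smul_right, ih]
      have hne : ((i.2 : ℕ) : ℂ) ≠ 0 := by exact_mod_cast i.2.2.ne'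
      rw [← mul_assoc]
      congr 1
      unfold ccoef
      field_simp
    · rw [form_zero_right, mul_zero, mul_zero]
end ClaimB
/-! ### The exponential `exp(∑ (-1)^{n-1} t^n z^n / n) = 1 + t z` -/

section GPoly

def Bpoly : PowerSeries (Polynomial ℂ) :=
  PowerSeries.mk fun j => (((j : ℂ))⁻¹ * (-1 : ℂ) ^ (j - 1)) • (Polynomial.X ^ j)

def Gpoly (m : ℕ) : Polynomial ℂ := PowerSeries.coeff m (expOf ℂ Bpoly)

theorem Bpoly_coeff (j : ℕ) : PowerSeries.coeff j Bpoly =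
    (((j : ℂ))⁻¹ * (-1 : ℂ) ^ (j - 1)) • (Polynomial.X ^ j) := by
  unfold Bpoly; rw [PowerSeries.coeff_mk]

theorem Bpoly_constantCoeff : PowerSeries.constantCoeff Bpoly = 0 := by
  rw [← PowerSeries.coeff_zero_eq_constantCoeff, Bpoly_coeff]
  simp

/-- the Euler operator `z d/dz` acting coefficientwise -/
def thetaOp {A : Type} [CommRing A] [Algebra ℂ A] (F : PowerSeries A) : PowerSeries A :=
  PowerSeries.mk fun n => ((n : ℂ)) • PowerSeries.coeff n F

theorem thetaOp_coeff {A : Type} [CommRing A] [Algebra ℂ A] (F : PowerSeries A) (n : ℕ) :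
    PowerSeries.coeff n (thetaOp F) = ((n : ℂ)) • PowerSeries.coeff n F := by
  unfold thetaOp; rw [PowerSeries.coeff_mk]

theorem thetaOp_leibniz {A : Type} [CommRing A] [Algebra ℂ A] (F G : PowerSeries A) :
    thetaOp (F * G) = thetaOp F * G + F * thetaOp G := by
  apply PowerSeries.ext
  intro n
  rw [map_add, thetaOp_coeff, PowerSeries.coeff_mul, PowerSeries.coeff_mul, PowerSeries.coeff_mul,
    Finset.smul_sum, ← Finset.sum_add_distrib]
  apply Finset.sum_congr rfl
  rintro ⟨a, b⟩ hab
  rw [Finset.HasAntidiagonal.mem_antidiagonal] at hab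
  rw [thetaOp_coeff, thetaOp_coeff, smul_mul_assoc, mul_smul_comm, ← add_smul]
  rw [← hab]
  push_cast
  ring_nf

theorem Gpoly_deriv (m : ℕ) :
    ((m : ℂ)) • Gpoly m = PowerSeries.coeff m (thetaOp Bpoly * expOf ℂ Bpoly) := by
  have h := coeff_expOf_deriv (A := Polynomial ℂ) thetaOp
    (fun F G => by
      apply PowerSeries.ext
      intro n
      rw [thetaOp_coeff, map_add, map_add, thetaOp_coeff, thetaOp_coeff, smul_add])
    (fun c F => by
      apply PowerSeries.ext
      intro n
      rw [thetaOp_coeff, PowerSeries.coeff_smul, PowerSeries.coeff_smul, thetaOp_coeff,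
        smul_comm])
    thetaOp_leibniz
    (fun F n hF => by rw [thetaOp_coeff, hF, smul_zero])
    Bpoly Bpoly_constantCoeff
    (by rw [thetaOp_coeff]; simp) m
  rw [← h, thetaOp_coeff]
  rfl

theorem Gpoly_zero : Gpoly 0 = 1 := coeff_zero_expOf _

theorem Gpoly_one : Gpoly 1 = Polynomial.X := by
  unfold Gpoly
  rw [coeff_expOf]
  rw [Finset.sum_range_succ, Finset.sum_range_one]
  rw [pow_zero, pow_one, PowerSeries.coeff_one, Bpoly_coeff]
  simp

theorem Gpoly_val : ∀ m : ℕ, Gpoly m =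
    if m = 0 then 1 else if m = 1 then Polynomial.X else 0 := by
  intro m
  induction m using Nat.strong_induction_on with
  | _ m ih =>
    rcases Nat.lt_or_ge m 2 with hm | hm
    · interval_cases m
      · simpa using Gpoly_zero
      · simpa using Gpoly_one
    · rw [if_neg (by omega), if_neg (by omega)]
      have key := Gpoly_deriv m
      rw [PowerSeries.coeff_mul] at key
      have hGe : ∀ j, PowerSeries.coeff j (expOf ℂ Bpoly) = Gpoly j := fun _ => rfl
      simp only [hGe] at key
      have hpair : ({((m : ℕ), 0), (m - 1, 1)} : Finset (ℕ × ℕ)) ⊆ Finset.HasAntidiagonal.antidiagonal m := by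
        intro x hx
        rcases Finset.mem_insert.mp hx with h | h
        · rw [h, Finset.HasAntidiagonal.mem_antidiagonal]; simp
        · rw [Finset.mem_singleton.mp h, Finset.HasAntidiagonal.mem_antidiagonal]; omega
      have hzero : ∀ x ∈ Finset.HasAntidiagonal.antidiagonal m, x ∉ ({((m : ℕ), 0), (m - 1, 1)} : Finset (ℕ × ℕ)) →
          PowerSeries.coeff x.1 (thetaOp Bpoly) * Gpoly x.2 = 0 := by
        rintro ⟨a, b⟩ hab hnx
        rw [Finset.HasAntidiagonal.mem_antidiagonal] at hab
        simp only [Finset.mem_insert, Finset.mem_singleton, Prod.mk.injEq, not_or, not_and] at hnx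
        rcases Nat.lt_or_ge b 2 with hb | hb
        · interval_cases b
          · exfalso; exact hnx.1 (by omega) rfl
          · exfalso; exact hnx.2 (by omega) rfl
        · rcases eq_or_ne b m with rfl | hbm
          · have ha : a = 0 := by omega
            rw [ha, thetaOp_coeff]
            simp
          · have : Gpoly b = 0 := by
              rw [ih b (by omega), if_neg (by omega), if_neg (by omega)]
            rw [this, mul_zero]
      rw [← Finset.sum_subset hpair hzero] at key
      have hne : ((m : ℕ), 0) ≠ (m - 1, 1) := by
        intro h
        have := congrArg Prod.snd h
        simp at this
      rw [Finset.sum_pair hne] at key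
      have hτm : PowerSeries.coeff m (thetaOp Bpoly) = ((-1 : ℂ) ^ (m - 1)) • Polynomial.X ^ m := by
        rw [thetaOp_coeff, Bpoly_coeff, smul_smul]
        congr 1
        have : (m : ℂ) ≠ 0 := by
          have : m ≠ 0 := by omega
          exact_mod_cast this
        field_simp
      have hτm1 : PowerSeries.coeff (m - 1) (thetaOp Bpoly) =
          ((-1 : ℂ) ^ (m - 2)) • Polynomial.X ^ (m - 1) := by
        rw [thetaOp_coeff, Bpoly_coeff, smul_smul]
        have h2 : m - 1 - 1 = m - 2 := by omega
        rw [h2]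
        congr 1
        have : ((m : ℕ) - 1 : ℕ) ≠ 0 := by omega
        have h3 : (((m - 1 : ℕ)) : ℂ) ≠ 0 := by exact_mod_cast this
        have h4 : ((m : ℂ) - 1) ≠ 0 := by
          intro h
          have h5 : (m : ℂ) = ((1 : ℕ) : ℂ) := by push_cast; linear_combination h
          have : m = 1 := Nat.cast_injective h5
          omega
        field_simp
      rw [hτm, hτm1, Gpoly_zero, ih 1 (by omega)] at key
      simp only [if_neg (by omega : ¬ (1 : ℕ) = 0), if_pos rfl, if_true] at key
      have hX : ((-1 : ℂ) ^ (m - 1)) • (Polynomial.X : Polynomial ℂ) ^ m * 1 +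
          ((-1 : ℂ) ^ (m - 2)) • (Polynomial.X : Polynomial ℂ) ^ (m - 1) * Polynomial.X = 0 := by
        rw [mul_one, smul_mul_assoc, ← pow_succ]
        have hm1 : m - 1 + 1 = m := by omega
        have hm2 : m - 1 = (m - 2) + 1 := by omega
        rw [hm1, hm2, pow_succ]
        rw [← add_smul]
        have : (-1 : ℂ) ^ (m - 2) * -1 + (-1 : ℂ) ^ (m - 2) = 0 := by ring
        rw [this, zero_smul]
      rw [hX] at key
      have hm0 : ((m : ℕ) : ℂ) ≠ 0 := by
        have : m ≠ 0 := by omega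
        exact_mod_cast this
      rcases smul_eq_zero.mp key with h | h
      · exact absurd h hm0
      · exact h

end GPoly
/-! ### The image of vertex-operator chains under `Lam` -/

section Chains
open scoped Classical
variable (p k : ℕ) [Fact p.Prime]

theorem map_expOf (f : Fock p k →ₐ[ℂ] Polynomial ℂ) (B : PowerSeries (Fock p k)) :
    PowerSeries.map (f.toRingHom) (expOf ℂ B) = expOf ℂ (PowerSeries.map f.toRingHom B) := by
  apply PowerSeries.ext
  intro n
  rw [PowerSeries.coeff_map, coeff_expOf, coeff_expOf, map_sum]
  apply Finset.sum_congr rfl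
  intro r _
  show f (((Nat.factorial r : ℂ))⁻¹ • PowerSeries.coeff n (B ^ r)) = _
  rw [map_smul]
  congr 1
  rw [← map_pow, PowerSeries.coeff_map]
  rfl

theorem Lam_hSeries (hk : 0 < k) (φ : PhiStar p k) (s : ℕ) :
    Lam p k (PowerSeries.coeff s (hSeries p k φ)) = Gpoly s := by
  have h1 : Lam p k (PowerSeries.coeff s (hSeries p k φ)) =
      PowerSeries.coeff s (PowerSeries.map (Lam p k).toRingHom (hSeries p k φ)) := by
    rw [PowerSeries.coeff_map]
    rfl
  rw [h1]
  unfold hSeries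
  rw [map_expOf]
  have h2 : PowerSeries.map (Lam p k).toRingHom
      (PowerSeries.mk fun n => ((n : ℂ))⁻¹ • pGen p k φ n) = Bpoly := by
    apply PowerSeries.ext
    intro j
    rw [PowerSeries.coeff_map, PowerSeries.coeff_mk, Bpoly_coeff]
    rcases Nat.eq_zero_or_pos j with hj | hj
    · subst hj
      rw [pGen_zero, smul_zero, map_zero]
      simp
    · show Lam p k (((j : ℂ))⁻¹ • pGen p k φ j) = _
      rw [map_smul]
      unfold pGen
      rw [dif_pos hj]
      have hX : Lam p k (X (φ, ⟨j, hj⟩)) =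
          ((-1 : ℂ) ^ (j - 1)) • (Polynomial.X ^ j) := by
        unfold Lam
        rw [aeval_X]
        rfl
      rw [hX, smul_smul]
  rw [h2]
  rfl

theorem Lam_hElt (hk : 0 < k) (φ : PhiStar p k) (z : ℤ) :
    Lam p k (hElt p k φ z) =
      if z = 0 then 1 else if z = 1 then Polynomial.X else 0 := by
  unfold hElt
  by_cases hz : 0 ≤ z
  · rw [if_pos hz, Lam_hSeries p k hk φ, Gpoly_val]
    by_cases h0 : z = 0
    · rw [if_pos (by omega : z.toNat = 0), if_pos h0]
    · rw [if_neg (by omega : ¬ z.toNat = 0), if_neg h0]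
      by_cases h1 : z = 1
      · rw [if_pos (by omega : z.toNat = 1), if_pos h1]
      · rw [if_neg (by omega : ¬ z.toNat = 1), if_neg h1]
  · rw [if_neg hz, map_zero, if_neg (by omega), if_neg (by omega)]

theorem wle_zero (w : ℕ) : WLE p k w (0 : Fock p k) := by
  intro m _
  rw [MvPolynomial.coeff_zero]

theorem derOp_wle (φ : PhiStar p k) {w : ℕ} {v : Fock p k} (n : ℕ) (h : WLE p k w v) :
    WLE p k (w - n) (derOp p k φ n v) := by
  unfold derOp
  split
  next hn =>
    exact wle_pderiv p k (φ, (⟨n, hn⟩ : ℕ+)) h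
  next hn =>
    show WLE p k (w - n) ((0 : Module.End ℂ (Fock p k)) v)
    rw [LinearMap.zero_apply]
    exact wle_zero p k _

theorem derOp_kill (φ : PhiStar p k) {w : ℕ} {v : Fock p k} (n : ℕ) (h : WLE p k w v)
    (hw : w < n) : derOp p k φ n v = 0 := by
  unfold derOp
  rw [dif_pos (by omega : 0 < n)]
  exact pderiv_eq_zero_of_wle p k _ h hw

theorem powS_kill (φ : PhiStar p k) : ∀ (j : ℕ) {w : ℕ} (v : Fock p k) (r : ℕ), WLE p k w v →
    w < r → (PowerSeries.coeff r (((PowerSeries.mk fun n => -(derOp p k φ n)) :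
      PowerSeries (Module.End ℂ (Fock p k))) ^ j)) v = 0 := by
  intro j
  induction j with
  | zero =>
    intro w v r hv hr
    rw [pow_zero, PowerSeries.coeff_one]
    rw [if_neg (by omega)]
    rw [LinearMap.zero_apply]
  | succ j ih =>
    intro w v r hv hr
    rw [pow_succ, PowerSeries.coeff_mul, LinearMap.sum_apply]
    apply Finset.sum_eq_zero
    rintro ⟨a, b⟩ hab
    rw [Finset.HasAntidiagonal.mem_antidiagonal] at hab
    have hval : ((-(derOp p k φ b) : Module.End ℂ (Fock p k))) v = -(derOp p k φ b v) := rfl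
    rw [Module.End.mul_apply, PowerSeries.coeff_mk, hval]
    rcases Nat.lt_or_ge w b with hbw | hbw
    · rw [derOp_kill p k φ b hv hbw, neg_zero, map_zero]
    · have h1 : WLE p k (w - b) (derOp p k φ b v) := derOp_wle p k φ b hv
      rw [map_neg, ih _ a h1 (by omega), neg_zero]

theorem sMinus_kill (φ : PhiStar p k) {w : ℕ} (v : Fock p k) (r : ℕ) (hv : WLE p k w v)
    (hr : w < r) : (PowerSeries.coeff r (sMinusSeries p k φ)) v = 0 := by
  unfold sMinusSeries
  rw [coeff_expOf, LinearMap.sum_apply]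
  apply Finset.sum_eq_zero
  intro j _
  rw [LinearMap.smul_apply, powS_kill p k φ j v r hv hr, smul_zero]

theorem sMinus_zero (φ : PhiStar p k) (v : Fock p k) :
    (PowerSeries.coeff 0 (sMinusSeries p k φ)) v = v := by
  unfold sMinusSeries
  rw [coeff_expOf]
  rw [Finset.sum_range_one, pow_zero, PowerSeries.coeff_one]
  simp

theorem Lam_S (hk : 0 < k) (φ : PhiStar p k)
    (S : PhiStar p k → ℤ → Module.End ℂ (Fock p k)) (hS : IsSOp p k S)
    (m : ℤ) (hm : 1 ≤ m) (v : Fock p k) :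
    Lam p k (S φ m v) =
      (if m = 1 then Polynomial.X * Lam p k v else 0) := by
  rw [hS φ m v]
  set w := v.support.sup (wt p k) with hw
  have hsub : (Function.support fun r : ℕ =>
      hElt p k φ (m + r) * (PowerSeries.coeff r (sMinusSeries p k φ) v)) ⊆
      ↑(Finset.range (w + 1)) := by
    intro r hr
    rw [Function.mem_support] at hr
    simp only [Finset.coe_range, Set.mem_Iio]
    by_contra hcon
    apply hr
    rw [sMinus_kill p k φ v r (wle_exists p k v) (by omega), mul_zero]
  rw [finsum_eq_finset_sum_of_support_subset _ hsub, map_sum]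
  have hterm : ∀ r ∈ Finset.range (w + 1),
      Lam p k (hElt p k φ (m + r) * (PowerSeries.coeff r (sMinusSeries p k φ) v)) =
      if m = 1 ∧ r = 0 then Polynomial.X * Lam p k v else 0 := by
    intro r _
    rw [map_mul, Lam_hElt p k hk φ]
    rw [if_neg (by omega : ¬ (m + r = 0))]
    by_cases h1 : m + r = 1
    · have hm1 : m = 1 ∧ r = 0 := by omega
      rw [if_pos h1, if_pos hm1, hm1.2, sMinus_zero]
    · rw [if_neg h1, zero_mul, if_neg (by omega)]
  rw [Finset.sum_congr rfl hterm]
  by_cases hm1 : m = 1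
  · rw [Finset.sum_eq_single_of_mem 0 (Finset.mem_range.mpr (by omega))]
    · rw [if_pos (⟨hm1, rfl⟩ : m = 1 ∧ (0:ℕ) = 0), if_pos hm1]
    · intro b _ hb
      rw [if_neg (by tauto)]
  · rw [if_neg hm1, Finset.sum_eq_zero]
    intro r _
    rw [if_neg (by tauto)]

theorem SchainN_nil (S : PhiStar p k → ℤ → Module.End ℂ (Fock p k)) (φ : PhiStar p k) :
    SchainN p k S φ [] 1 = 1 := by
  unfold SchainN
  simp

theorem SchainN_cons (S : PhiStar p k → ℤ → Module.End ℂ (Fock p k)) (φ : PhiStar p k)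
    (a : ℕ) (t : List ℕ) (v : Fock p k) :
    SchainN p k S φ (a :: t) v = S φ (a : ℤ) (SchainN p k S φ t v) := by
  unfold SchainN
  simp [Module.End.mul_apply]

end Chains
/-! ### The right-hand vector `Q_n 1` -/

section RHS
open scoped Classical
variable (p k : ℕ) [Fact p.Prime]

theorem qpow_sub_one_ne (hk : 0 < k) (n : ℕ) (hn : 0 < n) : qC p k ^ n - 1 ≠ 0 := by
  intro h
  have h1 : qC p k ^ n = ((p ^ (k * n) : ℕ) : ℂ) := by
    unfold qC
    push_cast
    rw [← pow_mul]
  have h2 : qC p k ^ n = 1 := by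
    have := sub_eq_zero.mp h
    exact this
  rw [h1] at h2
  have h3 : (p ^ (k * n) : ℕ) = 1 := by exact_mod_cast h2
  have hp : 1 < p := (Fact.out : p.Prime).one_lt
  have : 1 < p ^ (k * n) := Nat.one_lt_pow (by positivity) hp
  omega

theorem pF1_eq (hk : 0 < k) (φ : PhiStar p k) (n : ℕ) :
    pF1 p k n = ((-1 : ℂ) ^ (n - 1) / (qC p k ^ n - 1)) • pGen p k φ n := by
  haveI := PhiStarUnique p k hk
  unfold pF1
  congr 1
  rw [finsum_unique]
  have hdef : (default : PhiStar p k) = φ := Subsingleton.elim _ _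
  rw [hdef, degS_eq_one p k hk φ, finsum_eq_if, if_pos (one_dvd n), Nat.div_one, Nat.cast_one,
    one_smul]

theorem qPlus_eq (hk : 0 < k) (φ : PhiStar p k) :
    qPlusSeries p k = expOf ℂ (Bq p k φ) := by
  have harg : (PowerSeries.mk fun n => ((qC p k ^ n - 1) / (n : ℂ)) • pF1 p k n) = Bq p k φ := by
    apply PowerSeries.ext
    intro j
    rw [PowerSeries.coeff_mk, Bq_coeff]
    rcases Nat.eq_zero_or_pos j with hj | hj
    · subst hj
      rw [pGen_zero, smul_zero]
      rw [pow_zero, sub_self]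
      norm_num
    · rw [pF1_eq p k hk φ j, smul_smul]
      congr 1
      unfold ccoef
      have h1 := qpow_sub_one_ne p k hk j hj
      have h2 : ((j : ℕ) : ℂ) ≠ 0 := by
        have : j ≠ 0 := by omega
        exact_mod_cast this
      field_simp
  unfold qPlusSeries
  rw [harg]

theorem D_one_eq_zero (hk : 0 < k) (D : ℕ → Module.End ℂ (Fock p k)) (hD : IsD p k D)
    (n : ℕ) (hn : 0 < n) : D n 1 = 0 := by
  apply eq_zero_of_form
  intro v
  rw [hD n hn 1 v, form_one_left]
  have hcc : coeff 0 (pF1 p k n * v) = 0 := by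
    rw [← MvPolynomial.constantCoeff_eq, map_mul]
    have : MvPolynomial.constantCoeff (pF1 p k n) = 0 := by
      rw [pF1_eq p k hk (phiOne p k) n, MvPolynomial.smul_eq_C_mul, map_mul,
        pGen_constantCoeff, mul_zero]
    rw [this, zero_mul]
  rw [hcc, mul_zero]

theorem qMinus_coeff_one (hk : 0 < k) (D : ℕ → Module.End ℂ (Fock p k)) (hD : IsD p k D)
    (b : ℕ) : (PowerSeries.coeff b (qMinusSeries p k D)) 1 =
      if b = 0 then (1 : Fock p k) else 0 := by
  set T : PowerSeries (Module.End ℂ (Fock p k)) :=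
    PowerSeries.mk fun n => if n = 0 then 0 else (-((qC p k)⁻¹ ^ n)) • D n with hT
  have hT1 : ∀ y, (PowerSeries.coeff y T) (1 : Fock p k) = 0 := by
    intro y
    rw [hT, PowerSeries.coeff_mk]
    rcases eq_or_ne y 0 with hy | hy
    · rw [if_pos hy, LinearMap.zero_apply]
    · rw [if_neg hy, LinearMap.smul_apply, D_one_eq_zero p k hk D hD y (by omega), smul_zero]
  have hpow : ∀ s y : ℕ, (PowerSeries.coeff y (T ^ (s + 1))) (1 : Fock p k) = 0 := by
    intro s y
    rw [pow_succ, PowerSeries.coeff_mul, LinearMap.sum_apply]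
    apply Finset.sum_eq_zero
    rintro ⟨x, y'⟩ _
    rw [Module.End.mul_apply, hT1 y', map_zero]
  show (PowerSeries.coeff b (expOf ℂ T)) (1 : Fock p k) = _
  rw [coeff_expOf, LinearMap.sum_apply]
  rw [Finset.sum_eq_single_of_mem 0 (Finset.mem_range.mpr (by omega))]
  · rw [pow_zero, PowerSeries.coeff_one, LinearMap.smul_apply]
    rcases eq_or_ne b 0 with hb | hb
    · rw [if_pos hb, if_pos hb, Module.End.one_apply]
      simp
    · rw [if_neg hb, if_neg hb, LinearMap.zero_apply, smul_zero]
  · intro j _ hj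
    obtain ⟨s, rfl⟩ := Nat.exists_eq_succ_of_ne_zero hj
    rw [LinearMap.smul_apply, hpow s b, smul_zero]

theorem Qop_one (hk : 0 < k) (φ : PhiStar p k) (D : ℕ → Module.End ℂ (Fock p k))
    (hD : IsD p k D) (Qop : ℤ → Module.End ℂ (Fock p k)) (hQ : IsQ p k D Qop) (n : ℕ) :
    Qop (n : ℤ) 1 = Evec p k φ n := by
  rw [hQ (n : ℤ) 1]
  rw [finsum_eq_single _ 0]
  · rw [qMinus_coeff_one p k hk D hD 0, if_pos rfl, mul_one]
    unfold qPlusElt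
    rw [if_pos (by omega : (0 : ℤ) ≤ (n : ℤ) + (0 : ℕ))]
    have : ((n : ℤ) + ((0 : ℕ) : ℤ)).toNat = n := by omega
    rw [this, qPlus_eq p k hk φ]
    rfl
  · intro b hb
    rw [qMinus_coeff_one p k hk D hD b, if_neg hb, mul_zero]

theorem Lam_chain_ones (hk : 0 < k) (φ : PhiStar p k)
    (S : PhiStar p k → ℤ → Module.End ℂ (Fock p k)) (hS : IsSOp p k S) :
    ∀ lam : List ℕ, (∀ a ∈ lam, a = 1) →
      Lam p k (SchainN p k S φ lam 1) = Polynomial.X ^ lam.length := by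
  intro lam
  induction lam with
  | nil =>
    intro _
    rw [SchainN_nil, map_one, List.length_nil, pow_zero]
  | cons a t ih =>
    intro h
    have ha : a = 1 := h a (List.mem_cons_self)
    rw [SchainN_cons, ha]
    have h1 : ((1 : ℕ) : ℤ) = 1 := by norm_num
    rw [h1, Lam_S p k hk φ S hS 1 (le_refl 1) _, if_pos rfl,
      ih (fun x hx => h x (List.mem_cons_of_mem a hx))]
    rw [List.length_cons, pow_succ]
    ring

theorem ones_sum : ∀ lam : List ℕ, (∀ a ∈ lam, a = 1) → lam.sum = lam.length := by
  intro lam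
  induction lam with
  | nil => intro _; rfl
  | cons a t ih =>
    intro h
    rw [List.sum_cons, List.length_cons, h a (List.mem_cons_self),
      ih (fun x hx => h x (List.mem_cons_of_mem a hx))]
    omega

end RHS
/-- for `|φ| = 1` and a partition `λ ⊢ m`, with `n = m`,
`⟨S_{λ_1}(φ)⋯S_{λ_l}(φ)·1, Q_n·1⟩ = (−1)^{m+n}` if `λ = (1^m)` and `0` otherwise. -/
theorem stmt_9 (p k : ℕ) [Fact p.Prime] (hk : 0 < k) (φ : PhiStar p k)
    (hd1 : degS p k φ = 1)
    (S : PhiStar p k → ℤ → Module.End ℂ (Fock p k)) (hS : IsSOp p k S)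
    (D : ℕ → Module.End ℂ (Fock p k)) (hD : IsD p k D)
    (Qop : ℤ → Module.End ℂ (Fock p k)) (hQ : IsQ p k D Qop)
    (lam : List ℕ) (hsort : lam.Pairwise (· ≥ ·)) (hpos : ∀ a ∈ lam, 0 < a)
    (n : ℕ) (hn : n = lam.sum) :
    form p k (SchainN p k S φ lam 1) (Qop (n : ℤ) 1) =
      if ∀ a ∈ lam, a = 1 then (-1 : ℂ) ^ (lam.sum + n) else 0 := by
  haveI := Mstar_subsingleton p k hk
  rw [Qop_one p k hk φ D hD Qop hQ n, claimA p k hk φ]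
  by_cases hall : ∀ a ∈ lam, a = 1
  · rw [if_pos hall, Lam_chain_ones p k hk φ S hS lam hall, Polynomial.coeff_X_pow]
    have hsum : lam.sum = lam.length := ones_sum lam hall
    rw [if_pos (by omega : n = lam.length)]
    have heven : Even (lam.sum + n) := ⟨lam.sum, by omega⟩
    rw [heven.neg_one_pow]
  · rw [if_neg hall]
    push_neg at hall
    obtain ⟨a, ha_mem, ha_ne⟩ := hall
    cases lam with
    | nil => exact absurd ha_mem (List.not_mem_nil)
    | cons b t =>
      have hb : 2 ≤ b := by
        have hage : 0 < a := hpos a ha_mem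
        have ha2 : 2 ≤ a := by omega
        rcases List.mem_cons.mp ha_mem with rfl | hat
        · exact ha2
        · have := (List.pairwise_cons.mp hsort).1 a hat
          omega
      rw [SchainN_cons, Lam_S p k hk φ S hS (b : ℤ) (by exact_mod_cast Nat.one_le_of_lt hb) _,
        if_neg (show ¬ ((b : ℕ) : ℤ) = 1 by exact_mod_cast (by omega : ¬ b = 1)),
        Polynomial.coeff_zero]

end JW
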